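/- The continuous relaxation of the single source/sink reliability MILP is exact: for any matrix A and nonzero vector d̂, the supremum of (1−y) over {(y,z) : y ∈ [0,1], z ≥ 0, A z = (1−y)·d̂} equals the supremum of (1−y) over the same set with the additional constraint y ∈ {0,1}. -/
import Mathlib


/-- Exactness of the continuous relaxation: for any matrix `A` and nonzero `d̂`, the
supremum of `1 - y` over the relaxed feasible set (`y ∈ [0,1]`) equals the supremum of
`1 - y` over the integer feasible set (`y ∈ {0,1}`). -/
theorem relaxation_exact {m n : ℕ}
    (A : Matrix (Fin m) (Fin n) ℝ) (d : Fin m → ℝ) (hd : d ≠ 0) :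
    sSup {v : ℝ | ∃ (y : ℝ) (z : Fin n → ℝ),
        y ∈ Set.Icc (0 : ℝ) 1 ∧ 0 ≤ z ∧ A.mulVec z = (1 - y) • d ∧ v = 1 - y} =
    sSup {v : ℝ | ∃ (y : ℝ) (z : Fin n → ℝ),
        y ∈ ({0, 1} : Set ℝ) ∧ 0 ≤ z ∧ A.mulVec z = (1 - y) • d ∧ v = 1 - y} := by
  by_cases h : ∃ z : Fin n → ℝ, 0 ≤ z ∧ A.mulVec z = d
  · obtain ⟨z, hz, hAz⟩ := h
    have h1L : (1 : ℝ) ∈ {v : ℝ | ∃ (y : ℝ) (z : Fin n → ℝ),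
        y ∈ Set.Icc (0 : ℝ) 1 ∧ 0 ≤ z ∧ A.mulVec z = (1 - y) • d ∧ v = 1 - y} := by
      exact ⟨0, z, ⟨le_refl 0, zero_le_one⟩, hz, by simpa using hAz, by norm_num⟩
    have h1R : (1 : ℝ) ∈ {v : ℝ | ∃ (y : ℝ) (z : Fin n → ℝ),
        y ∈ ({0, 1} : Set ℝ) ∧ 0 ≤ z ∧ A.mulVec z = (1 - y) • d ∧ v = 1 - y} := by
      exact ⟨0, z, Or.inl rfl, hz, by simpa using hAz, by norm_num⟩
    have hL : sSup {v : ℝ | ∃ (y : ℝ) (z : Fin n → ℝ),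
        y ∈ Set.Icc (0 : ℝ) 1 ∧ 0 ≤ z ∧ A.mulVec z = (1 - y) • d ∧ v = 1 - y} = 1 := by
      apply le_antisymm
      · apply Real.sSup_le
        · rintro v ⟨y, z', ⟨hy0, _⟩, _, _, rfl⟩; linarith
        · exact zero_le_one
      · exact le_csSup ⟨1, by rintro v ⟨y, z', ⟨hy0, _⟩, _, _, rfl⟩; linarith⟩ h1L
    have hR : sSup {v : ℝ | ∃ (y : ℝ) (z : Fin n → ℝ),
        y ∈ ({0, 1} : Set ℝ) ∧ 0 ≤ z ∧ A.mulVec z = (1 - y) • d ∧ v = 1 - y} = 1 := by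
      apply le_antisymm
      · apply Real.sSup_le
        · rintro v ⟨y, z', hy, _, _, rfl⟩
          rcases hy with rfl | rfl <;> norm_num
        · exact zero_le_one
      · refine le_csSup ⟨1, ?_⟩ h1R
        rintro v ⟨y, z', hy, _, _, rfl⟩
        rcases hy with rfl | rfl <;> norm_num
    rw [hL, hR]
  · have key : ∀ (y : ℝ) (z : Fin n → ℝ), 0 ≤ z → A.mulVec z = (1 - y) • d →
        0 ≤ 1 - y → 1 - y = 0 := by
      intro y z hz hAz hy
      by_contra hne
      have hpos : 0 < 1 - y := lt_of_le_of_ne hy (Ne.symm hne)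
      apply h
      refine ⟨(1 - y)⁻¹ • z, ?_, ?_⟩
      · intro i
        exact mul_nonneg (inv_nonneg.mpr hpos.le) (hz i)
      · rw [Matrix.mulVec_smul, hAz, smul_smul, inv_mul_cancel₀ hpos.ne', one_smul]
    have hsetL : {v : ℝ | ∃ (y : ℝ) (z : Fin n → ℝ),
        y ∈ Set.Icc (0 : ℝ) 1 ∧ 0 ≤ z ∧ A.mulVec z = (1 - y) • d ∧ v = 1 - y} = {0} := by
      ext v
      simp only [Set.mem_setOf_eq, Set.mem_singleton_iff]
      constructor
      · rintro ⟨y, z, ⟨hy0, hy1⟩, hz, hAz, rfl⟩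
        exact key y z hz hAz (by linarith)
      · rintro rfl
        exact ⟨1, 0, ⟨zero_le_one, le_refl 1⟩, le_refl 0, by simp, by norm_num⟩
    have hsetR : {v : ℝ | ∃ (y : ℝ) (z : Fin n → ℝ),
        y ∈ ({0, 1} : Set ℝ) ∧ 0 ≤ z ∧ A.mulVec z = (1 - y) • d ∧ v = 1 - y} = {0} := by
      ext v
      simp only [Set.mem_setOf_eq, Set.mem_singleton_iff]
      constructor
      · rintro ⟨y, z, hy, hz, hAz, rfl⟩
        rcases hy with rfl | rfl
        · exact key 0 z hz hAz (by norm_num)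
        · norm_num
      · rintro rfl
        exact ⟨1, 0, Or.inr rfl, le_refl 0, by simp, by norm_num⟩
    rw [hsetL, hsetR]
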